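/- Let $A \in \mathbb{C}^{n\times n}$, $B \in \mathbb{C}^{n\times m}$, $C \in \mathbb{C}^{p\times n}$, $\tau > 0$. Let $\hat{A} = \hat{R}\hat{\Lambda}\hat{R}^{-1}$ with $\hat{R} \in \mathbb{C}^{r\times r}$ invertible and $\hat{\Lambda} = \mathrm{diag}(\hat{\lambda}_1,\ldots,\hat{\lambda}_r)$, let $\hat{B} \in \mathbb{C}^{r\times m}$, $\hat{C} \in \mathbb{C}^{p\times r}$, and suppose $-\hat{\lambda}_i I - A$ and $-\hat{\lambda}_i I - \hat{A}$ are invertible for a given index $i$. Set $B_\tau = \exp(\tau A)B$, $\hat{B}_\tau = \exp(\tau\hat{A})\hat{B}$, let $\hat{r}_i^T$ be the $i$-th row of $\hat{R}^{-1}\hat{B}$, and let $\bar{P}_\tau$ satisfy $A\bar{P}_\tau + \bar{P}_\tau\hat{A}^T + B\hat{B}^T - B_\tau\hat{B}_\tau^T = 0$ and $\hat{P}_\tau$ satisfy $\hat{A}\hat{P}_\tau + \hat{P}_\tau\hat{A}^T + \hat{B}\hat{B}^T - \hat{B}_\tau\hat{B}_\tau^T = 0$. Then the $i$-th column of $\bar{P}_\tau\hat{R}^{-T}$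 equals $(-\hat{\lambda}_i I - A)^{-1}B\hat{r}_i - (-\hat{\lambda}_i I - A)^{-1}B_\tau e^{\hat{\lambda}_i\tau}\hat{r}_i$, and the $i$-th column of $\hat{P}_\tau\hat{R}^{-T}$ equals $(-\hat{\lambda}_i I - \hat{A})^{-1}\hat{B}\hat{r}_i - (-\hat{\lambda}_i I - \hat{A})^{-1}\hat{B}_\tau e^{\hat{\lambda}_i\tau}\hat{r}_i$. -/

import Mathlib

open Matrix NormedSpace

/-- Column extraction from a Sylvester-type equation with diagonal coefficient. -/
lemma sylvester_col {N r : ℕ} (X : Matrix (Fin N) (Fin N) ℂ)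
    (Q S : Matrix (Fin N) (Fin r) ℂ) (d : Fin r → ℂ) (i : Fin r)
    (hM : IsUnit ((-d i) • (1 : Matrix (Fin N) (Fin N) ℂ) - X))
    (hE : X * Q + Q * Matrix.diagonal d = S) :
    (fun k => Q k i) =
      ((-d i) • (1 : Matrix (Fin N) (Fin N) ℂ) - X)⁻¹.mulVec (fun k => -S k i) := by
  set M := (-d i) • (1 : Matrix (Fin N) (Fin N) ℂ) - X with hMdef
  have hcol : ∀ (Y : Matrix (Fin N) (Fin N) ℂ),
      Y.mulVec (fun k => Q k i) = fun k => (Y * Q) k i := by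
    intro Y; funext k; simp [Matrix.mulVec, Matrix.mul_apply, dotProduct]
  have hMv : M.mulVec (fun k => Q k i) = fun k => -S k i := by
    rw [hcol]
    funext k
    have hS : (X * Q) k i + (Q * Matrix.diagonal d) k i = S k i := by
      rw [← Matrix.add_apply, hE]
    have hQd : (Q * Matrix.diagonal d) k i = Q k i * d i := by
      simp [Matrix.mul_diagonal]
    have hMQ : (M * Q) k i = -d i * Q k i - (X * Q) k i := by
      rw [hMdef, Matrix.sub_mul, Matrix.smul_mul, Matrix.one_mul, Matrix.sub_apply,
        Matrix.smul_apply]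
      simp [smul_eq_mul]
    rw [hMQ]
    have hXQ : (X * Q) k i = S k i - Q k i * d i := by
      rw [← hS, hQd]; ring
    rw [hXQ]; ring
  have hdet : IsUnit M.det := (Matrix.isUnit_iff_isUnit_det M).mp hM
  calc (fun k => Q k i) = (1 : Matrix (Fin N) (Fin N) ℂ).mulVec (fun k => Q k i) := by
        rw [Matrix.one_mulVec]
    _ = (M⁻¹ * M).mulVec (fun k => Q k i) := by rw [Matrix.nonsing_inv_mul M hdet]
    _ = M⁻¹.mulVec (M.mulVec (fun k => Q k i)) := by rw [← Matrix.mulVec_mulVec]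
    _ = M⁻¹.mulVec (fun k => -S k i) := by rw [hMv]

/-- The common column-formula argument, applied to both gramians. -/
lemma gramian_col_formula {N r m : ℕ}
    (X : Matrix (Fin N) (Fin N) ℂ)
    (BB BBtau : Matrix (Fin N) (Fin m) ℂ)
    (τ : ℝ)
    (Rhat : Matrix (Fin r) (Fin r) ℂ) (hRhat : IsUnit Rhat)
    (lamhat : Fin r → ℂ)
    (Ahat : Matrix (Fin r) (Fin r) ℂ)
    (hAhat : Ahat = Rhat * Matrix.diagonal lamhat * Rhat⁻¹)
    (Bhat : Matrix (Fin r) (Fin m) ℂ)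
    (Bhattau : Matrix (Fin r) (Fin m) ℂ)
    (hBhattau : Bhattau = exp ((τ : ℂ) • Ahat) * Bhat)
    (rhat : Fin r → Fin m → ℂ) (hrhat : ∀ i' j, rhat i' j = (Rhat⁻¹ * Bhat) i' j)
    (i : Fin r)
    (hinv : IsUnit ((-lamhat i) • (1 : Matrix (Fin N) (Fin N) ℂ) - X))
    (P : Matrix (Fin N) (Fin r) ℂ)
    (hP : X * P + P * Ahatᵀ + BB * Bhatᵀ - BBtau * Bhattauᵀ = 0) :
    (fun k => (P * (Rhat⁻¹)ᵀ) k i) =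
        ((-lamhat i) • (1 : Matrix (Fin N) (Fin N) ℂ) - X)⁻¹.mulVec (BB.mulVec (rhat i)) -
          ((-lamhat i) • (1 : Matrix (Fin N) (Fin N) ℂ) - X)⁻¹.mulVec
            (BBtau.mulVec (fun j => Complex.exp (lamhat i * τ) * rhat i j)) := by
  have hRdet : IsUnit Rhat.det := (Matrix.isUnit_iff_isUnit_det Rhat).mp hRhat
  have hRinv : Rhat⁻¹ * Rhat = 1 := Matrix.nonsing_inv_mul Rhat hRdet
  -- Ahatᵀ * (Rhat⁻¹)ᵀ = (Rhat⁻¹)ᵀ * diagonal lamhat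
  have hAT : Ahatᵀ * (Rhat⁻¹)ᵀ = (Rhat⁻¹)ᵀ * Matrix.diagonal lamhat := by
    rw [hAhat, Matrix.transpose_mul, Matrix.transpose_mul, Matrix.diagonal_transpose,
      Matrix.mul_assoc, Matrix.mul_assoc, ← Matrix.transpose_mul, hRinv,
      Matrix.transpose_one, Matrix.mul_one]
  -- exp of Ahat, conjugated back
  have hexp : Rhat⁻¹ * exp ((τ : ℂ) • Ahat) =
      Matrix.diagonal (fun j => Complex.exp (lamhat j * τ)) * Rhat⁻¹ := by
    have h1 : (τ : ℂ) • Ahat = Rhat * ((τ : ℂ) • Matrix.diagonal lamhat) * Rhat⁻¹ := by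
      rw [hAhat, Matrix.mul_smul, Matrix.smul_mul]
    have h2 : exp ((τ : ℂ) • Matrix.diagonal lamhat) =
        Matrix.diagonal (fun j => Complex.exp (lamhat j * τ)) := by
      have hd : (τ : ℂ) • Matrix.diagonal lamhat
          = Matrix.diagonal (fun j => lamhat j * (τ : ℂ)) := by
        ext a b
        by_cases hab : a = b <;> simp [Matrix.diagonal_apply, hab, mul_comm]
      rw [hd, Matrix.exp_diagonal, Pi.exp_def]
      simp only [← Complex.exp_eq_exp_ℂ]
    rw [h1, Matrix.exp_conj Rhat ((τ : ℂ) • Matrix.diagonal lamhat) hRhat, h2,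
      ← Matrix.mul_assoc, ← Matrix.mul_assoc, hRinv, Matrix.one_mul]
  -- the Sylvester equation in the new basis
  have h0 : X * P + P * Ahatᵀ = BBtau * Bhattauᵀ - BB * Bhatᵀ := by
    have h00 : X * P + P * Ahatᵀ + BB * Bhatᵀ = BBtau * Bhattauᵀ := sub_eq_zero.mp hP
    rw [eq_sub_iff_add_eq]
    exact h00
  have hE : X * (P * (Rhat⁻¹)ᵀ) + (P * (Rhat⁻¹)ᵀ) * Matrix.diagonal lamhat =
      (BBtau * Bhattauᵀ - BB * Bhatᵀ) * (Rhat⁻¹)ᵀ := by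
    calc X * (P * (Rhat⁻¹)ᵀ) + (P * (Rhat⁻¹)ᵀ) * Matrix.diagonal lamhat
        = X * P * (Rhat⁻¹)ᵀ + P * ((Rhat⁻¹)ᵀ * Matrix.diagonal lamhat) := by
          rw [Matrix.mul_assoc X, Matrix.mul_assoc P]
      _ = X * P * (Rhat⁻¹)ᵀ + P * (Ahatᵀ * (Rhat⁻¹)ᵀ) := by rw [hAT]
      _ = X * P * (Rhat⁻¹)ᵀ + P * Ahatᵀ * (Rhat⁻¹)ᵀ := by rw [Matrix.mul_assoc P]
      _ = (X * P + P * Ahatᵀ) * (Rhat⁻¹)ᵀ := by rw [Matrix.add_mul]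
      _ = (BBtau * Bhattauᵀ - BB * Bhatᵀ) * (Rhat⁻¹)ᵀ := by rw [h0]
  have hcol := sylvester_col X (P * (Rhat⁻¹)ᵀ)
    ((BBtau * Bhattauᵀ - BB * Bhatᵀ) * (Rhat⁻¹)ᵀ) lamhat i hinv hE
  have hvec : (fun k => -((BBtau * Bhattauᵀ - BB * Bhatᵀ) * (Rhat⁻¹)ᵀ) k i) =
      BB.mulVec (rhat i) - BBtau.mulVec (fun j => Complex.exp (lamhat i * τ) * rhat i j) := by
    funext k
    have hBcol : ∀ j : Fin m, (Bhatᵀ * (Rhat⁻¹)ᵀ) j i = rhat i j := by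
      intro j
      rw [← Matrix.transpose_mul, Matrix.transpose_apply, ← hrhat]
    have hBtcol : ∀ j : Fin m, (Bhattauᵀ * (Rhat⁻¹)ᵀ) j i =
        Complex.exp (lamhat i * τ) * rhat i j := by
      intro j
      rw [← Matrix.transpose_mul, Matrix.transpose_apply, hBhattau, ← Matrix.mul_assoc, hexp,
        Matrix.mul_assoc, Matrix.diagonal_mul, hrhat]
    have lhs : -((BBtau * Bhattauᵀ - BB * Bhatᵀ) * (Rhat⁻¹)ᵀ) k i
        = (BB * (Bhatᵀ * (Rhat⁻¹)ᵀ)) k i - (BBtau * (Bhattauᵀ * (Rhat⁻¹)ᵀ)) k i := by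
      rw [← Matrix.mul_assoc, ← Matrix.mul_assoc, ← Matrix.sub_apply, ← Matrix.sub_mul,
        ← neg_sub (BB * Bhatᵀ) (BBtau * Bhattauᵀ), Matrix.neg_mul, Matrix.neg_apply, neg_neg]
    have e1 : (BB * (Bhatᵀ * (Rhat⁻¹)ᵀ)) k i = BB.mulVec (rhat i) k := by
      simp only [Matrix.mul_apply, Matrix.mulVec, dotProduct, hBcol]
    have e2 : (BBtau * (Bhattauᵀ * (Rhat⁻¹)ᵀ)) k i
        = BBtau.mulVec (fun j => Complex.exp (lamhat i * τ) * rhat i j) k := by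
      simp only [Matrix.mul_apply, Matrix.mulVec, dotProduct, hBtcol]
    rw [lhs, e1, e2]
    rfl
  rw [hcol, hvec, Matrix.mulVec_sub]

theorem time_limited_gramian_columnwise_formula
    {n m p r : ℕ}
    (A : Matrix (Fin n) (Fin n) ℂ)
    (B : Matrix (Fin n) (Fin m) ℂ)
    (C : Matrix (Fin p) (Fin n) ℂ)
    (τ : ℝ) (hτ : 0 < τ)
    (Rhat : Matrix (Fin r) (Fin r) ℂ) (hRhat : IsUnit Rhat)
    (lamhat : Fin r → ℂ)
    (Ahat : Matrix (Fin r) (Fin r) ℂ)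
    (hAhat : Ahat = Rhat * Matrix.diagonal lamhat * Rhat⁻¹)
    (Bhat : Matrix (Fin r) (Fin m) ℂ)
    (Chat : Matrix (Fin p) (Fin r) ℂ)
    (i : Fin r)
    (hinvA : IsUnit ((-lamhat i) • (1 : Matrix (Fin n) (Fin n) ℂ) - A))
    (hinvAhat : IsUnit ((-lamhat i) • (1 : Matrix (Fin r) (Fin r) ℂ) - Ahat))
    (Btau : Matrix (Fin n) (Fin m) ℂ) (hBtau : Btau = exp ((τ : ℂ) • A) * B)
    (Bhattau : Matrix (Fin r) (Fin m) ℂ) (hBhattau : Bhattau = exp ((τ : ℂ) • Ahat) * Bhat)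
    (rhat : Fin r → Fin m → ℂ) (hrhat : ∀ i' j, rhat i' j = (Rhat⁻¹ * Bhat) i' j)
    (Pbartau : Matrix (Fin n) (Fin r) ℂ)
    (hPbartau : A * Pbartau + Pbartau * Ahatᵀ + B * Bhatᵀ - Btau * Bhattauᵀ = 0)
    (Phattau : Matrix (Fin r) (Fin r) ℂ)
    (hPhattau : Ahat * Phattau + Phattau * Ahatᵀ + Bhat * Bhatᵀ - Bhattau * Bhattauᵀ = 0) :
    (fun k => (Pbartau * (Rhat⁻¹)ᵀ) k i) =
        ((-lamhat i) • (1 : Matrix (Fin n) (Fin n) ℂ) - A)⁻¹.mulVec (B.mulVec (rhat i)) -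
          ((-lamhat i) • (1 : Matrix (Fin n) (Fin n) ℂ) - A)⁻¹.mulVec
            (Btau.mulVec (fun j => Complex.exp (lamhat i * τ) * rhat i j)) ∧
      (fun k => (Phattau * (Rhat⁻¹)ᵀ) k i) =
        ((-lamhat i) • (1 : Matrix (Fin r) (Fin r) ℂ) - Ahat)⁻¹.mulVec (Bhat.mulVec (rhat i)) -
          ((-lamhat i) • (1 : Matrix (Fin r) (Fin r) ℂ) - Ahat)⁻¹.mulVec
            (Bhattau.mulVec (fun j => Complex.exp (lamhat i * τ) * rhat i j)) := by
  constructor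
  · exact gramian_col_formula A B Btau τ Rhat hRhat lamhat Ahat hAhat Bhat Bhattau hBhattau
      rhat hrhat i hinvA Pbartau hPbartau
  · exact gramian_col_formula Ahat Bhat Bhattau τ Rhat hRhat lamhat Ahat hAhat Bhat Bhattau
      hBhattau rhat hrhat i hinvAhat Phattau hPhattau
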